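/- The ℚ-linear map β̃ of W defined by β̃: Ẽ₁^(ℓ) ↦ Ẽ₉^(3−ℓ), Ẽ₂^(ℓ) ↦ Ẽ₃^(3−ℓ), Ẽ₃^(ℓ) ↦ −Ẽ₁^(3−ℓ), Ẽ₄^(ℓ) ↦ Ẽ₈^(3−ℓ), Ẽ₅^(ℓ) ↦ −Ẽ₄^(3−ℓ), Ẽ₆^(ℓ) ↦ Ẽ₆^(3−ℓ), Ẽ₇^(ℓ) ↦ −Ẽ₅^(3−ℓ), Ẽ₈^(ℓ) ↦ Ẽ₇^(3−ℓ), Ẽ₉^(ℓ) ↦ −Ẽ₂^(3−ℓ), Ẽ₁₀^(ℓ) ↦ Ẽ₁₀^(ℓ), Ẽ₁₁^(ℓ) ↦ Ẽ₁₁^(ℓ), Ẽ₁₂^(ℓ) ↦ Ẽ₁₂^(3−ℓ) (for ℓ = 1, 2) preserves the bilinear form and maps the Niemeier lattice N onto itself, and has order 4. Moreover, the subgroup of the automorphism group of N generated by β̃ together with α̃¹ and α̃² has order 36 and is isomorphic to (ℤ/3 × ℤ/3) ⋊ ℤ/4, where the generator of ℤ/4 acts on ℤ/3 × ℤ/3 by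 (a,b) ↦ (−b,a). -/

import Mathlib

noncomputable section

abbrev JN : Type := Fin 12 × Fin 2
abbrev WN : Type := JN → ℚ

/-- The simple roots `Ẽ_j^(k)` (with `k : Fin 2` corresponding to `k+1 ∈ {1,2}`). -/
def Et (j : Fin 12) (k : Fin 2) : WN := Pi.single (j, k) 1

/-- Gram coefficients of the (positive definite) bilinear form on `W`. -/
def GN : JN → JN → ℚ := fun i j =>
  if i.1 = j.1 then (if i.2 = j.2 then 2 else -1) else 0

/-- The symmetric bilinear form on `W`. -/
def BW (x y : WN) : ℚ := ∑ i : JN, ∑ j : JN, x i * GN i j * y j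

/-- `Ẽ_j := Ẽ_j^(1) + 2·Ẽ_j^(2)`. -/
def EtV (j : Fin 12) : WN := Et j 0 + 2 • Et j 1

/-- The rows of the generating matrix of the glue code. -/
def glueMat : Fin 6 → Fin 12 → ℚ :=
  ![![0, 1, 1, 1, 1, 1, 1, 0, 0, 0, 0, 0],
    ![-1, 0, 1, -1, -1, 1, 0, 1, 0, 0, 0, 0],
    ![-1, 1, 0, 1, -1, -1, 0, 0, 1, 0, 0, 0],
    ![-1, -1, 1, 0, 1, -1, 0, 0, 0, 1, 0, 0],
    ![-1, -1, -1, 1, 0, 1, 0, 0, 0, 0, 1, 0],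
    ![-1, 1, -1, -1, 1, 0, 0, 0, 0, 0, 0, 1]]

/-- The glue vectors `w_i := (1/3)·∑_j a_{ij}·Ẽ_j`. -/
def wvec (i : Fin 6) : WN := (3 : ℚ)⁻¹ • ∑ j : Fin 12, glueMat i j • EtV j

/-- The Niemeier lattice `N` of type `A₂¹²`. -/
def NL : Submodule ℤ WN :=
  Submodule.span ℤ ({x | ∃ j k, x = Et j k} ∪ Set.range wvec)
abbrev F3 : Type := ZMod 3 × ZMod 3

/-- Translation by `(1,0)` on `𝔽₃²`. -/
def T1 : Equiv.Perm F3 := Equiv.addLeft ((1, 0) : F3)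

/-- Translation by `(0,1)` on `𝔽₃²`. -/
def T2 : Equiv.Perm F3 := Equiv.addLeft ((0, 1) : F3)

/-- The order-4 map `(a,b) ↦ (−b,a)` on `𝔽₃²`. -/
def JPerm : Equiv.Perm F3 :=
  ⟨fun p => (-p.2, p.1), fun p => (p.2, -p.1), fun p => by simp, fun p => by simp⟩

/-- A concrete model of the semidirect product `(ℤ/3 × ℤ/3) ⋊ ℤ/4`, where the generator of
`ℤ/4` acts on `ℤ/3 × ℤ/3` by `(a,b) ↦ (−b,a)`: the permutation group of `𝔽₃²` generated by the
translations `T1`, `T2` (generating `ℤ/3 × ℤ/3`) and the order-4 map `JPerm`, whose conjugation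
action on the translation subgroup is exactly `(a,b) ↦ (−b,a)`. -/
def ModelGroup : Subgroup (Equiv.Perm F3) := Subgroup.closure {T1, T2, JPerm}

/-- Index table for `α̃¹` (0-indexed). -/
def idx1 : Fin 12 → Fin 12 := ![3, 8, 0, 2, 7, 4, 1, 5, 6, 9, 10, 11]

/-- Sign table for `α̃¹`. -/
def sgn1 : Fin 12 → ℚ := ![1, -1, -1, -1, -1, -1, -1, 1, 1, 1, 1, 1]

/-- Index table for `α̃²`. -/
def idx2 : Fin 12 → Fin 12 := ![8, 4, 1, 6, 2, 3, 5, 0, 7, 9, 10, 11]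

/-- Index table for `β̃`. -/
def idxB : Fin 12 → Fin 12 := ![8, 2, 0, 7, 3, 5, 4, 6, 1, 9, 10, 11]

/-- Sign table for `β̃`. -/
def sgnB : Fin 12 → ℚ := ![1, 1, -1, 1, -1, 1, -1, 1, -1, 1, 1, 1]

/-- The superscript `ℓ ↦ 3−ℓ` swap performed by `β̃` (on all blocks except `Ẽ₁₀`, `Ẽ₁₁`). -/
def swB (j : Fin 12) (k : Fin 2) : Fin 2 := if j = 9 ∨ j = 10 then k else k.rev

/-! ### Auxiliary development -/

namespace St14

/-- Sign group: a sign (element of `ℤ/2`) for each coordinate. -/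
abbrev Sg : Type := JN → Multiplicative (ZMod 2)

/-- The action of a permutation of `JN` on sign vectors. -/
def rho : Equiv.Perm JN →* MulAut Sg where
  toFun σ :=
    { toFun := fun s => s ∘ σ.symm
      invFun := fun s => s ∘ σ
      left_inv := fun s => by funext i; simp
      right_inv := fun s => by funext i; simp
      map_mul' := fun s t => rfl }
  map_one' := by ext s i; rfl
  map_mul' σ τ := by ext s i; rfl

/-- The group of signed permutations of the coordinates. -/
abbrev Mon : Type := Sg ⋊[rho] Equiv.Perm JN

instance sdDecEq {N G : Type*} [Group N] [Group G] {φ : G →* MulAut N}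
    [DecidableEq N] [DecidableEq G] : DecidableEq (N ⋊[φ] G) := fun a b =>
  decidable_of_iff (a.left = b.left ∧ a.right = b.right)
    ⟨fun h => SemidirectProduct.ext h.1 h.2, fun h => by subst h; exact ⟨rfl, rfl⟩⟩

/-- Sign of an element of `ℤ/2` as a rational number. -/
def eps (a : Multiplicative (ZMod 2)) : ℚ := if Multiplicative.toAdd a = 0 then 1 else -1

/-- Sign of an element of `ℤ/2` as an integer. -/
def epsZ (a : Multiplicative (ZMod 2)) : ℤ := if Multiplicative.toAdd a = 0 then 1 else -1

lemma eps_cast (a : Multiplicative (ZMod 2)) : eps a = ((epsZ a : ℤ) : ℚ) := by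
  unfold eps epsZ; split_ifs <;> norm_num

lemma epsZ_mul : ∀ a b, epsZ (a * b) = epsZ a * epsZ b := by decide

lemma eps_mul (a b : Multiplicative (ZMod 2)) : eps (a * b) = eps a * eps b := by
  rw [eps_cast, eps_cast, eps_cast, ← Int.cast_mul, epsZ_mul]

/-- The (monomial) linear map attached to a signed permutation. -/
def lmap (m : Mon) : WN →ₗ[ℚ] WN where
  toFun x := fun i => eps (m.left i) * x (m.right⁻¹ i)
  map_add' x y := by funext i; simp [mul_add]
  map_smul' c x := by funext i; simp [smul_eq_mul]; ring

lemma lmap_apply (m : Mon) (x : WN) (i : JN) :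
    lmap m x i = eps (m.left i) * x (m.right⁻¹ i) := rfl

lemma lmap_mul (m n : Mon) : lmap (m * n) = (lmap m).comp (lmap n) := by
  apply LinearMap.ext; intro x; funext i
  show eps ((m * n).left i) * x ((m * n).right⁻¹ i)
      = eps (m.left i) * (eps (n.left (m.right⁻¹ i)) * x (n.right⁻¹ (m.right⁻¹ i)))
  rw [SemidirectProduct.mul_left, SemidirectProduct.mul_right]
  show eps (m.left i * n.left (m.right⁻¹ i)) * x ((m.right * n.right)⁻¹ i) = _
  rw [eps_mul, mul_inv_rev]
  show _ * x (n.right⁻¹ (m.right⁻¹ i)) = _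
  ring

lemma lmap_one : lmap (1 : Mon) = LinearMap.id := by
  apply LinearMap.ext; intro x; funext i
  show eps ((1 : Mon).left i) * x ((1 : Mon).right⁻¹ i) = x i
  rw [SemidirectProduct.one_left, SemidirectProduct.one_right]
  show eps 1 * x ((1 : Equiv.Perm JN)⁻¹ i) = x i
  rw [inv_one]
  show eps 1 * x i = x i
  rw [show eps 1 = 1 from rfl, one_mul]

/-- The monomial representation of `Mon` on `WN`. -/
def Lam : Mon →* (WN ≃ₗ[ℚ] WN) where
  toFun m := LinearEquiv.ofLinear (lmap m) (lmap m⁻¹)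
    (by rw [← lmap_mul, mul_inv_cancel, lmap_one])
    (by rw [← lmap_mul, inv_mul_cancel, lmap_one])
  map_one' := by
    refine LinearEquiv.ext fun x => ?_
    show lmap 1 x = x
    rw [lmap_one]; rfl
  map_mul' m n := by
    refine LinearEquiv.ext fun x => ?_
    show lmap (m * n) x = lmap m (lmap n x)
    rw [lmap_mul]; rfl

lemma Lam_apply (m : Mon) (x : WN) : Lam m x = lmap m x := rfl

lemma eps_eq_one_iff : ∀ a, eps a = 1 ↔ a = 1 := by decide

lemma Lam_inj : Function.Injective Lam := by
  rw [injective_iff_map_eq_one]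
  intro m hm
  have h : ∀ x : WN, lmap m x = x := by
    intro x
    have : Lam m x = (1 : WN ≃ₗ[ℚ] WN) x := by rw [hm]
    simpa [Lam_apply] using this
  have hσ : ∀ i : JN, m.right⁻¹ i = i := by
    intro i
    by_contra hne
    have h1 := congrFun (h (Pi.single i 1)) i
    rw [lmap_apply] at h1
    rw [Pi.single_apply, Pi.single_apply, if_neg hne, if_pos rfl, mul_zero] at h1
    exact zero_ne_one h1
  have hs : ∀ i : JN, m.left i = 1 := by
    intro i
    have h1 := congrFun (h (fun _ => 1)) i
    rw [lmap_apply, mul_one] at h1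
    exact (eps_eq_one_iff _).1 h1
  have hr : m.right = 1 := by
    rw [← inv_eq_one]
    exact Equiv.ext fun i => hσ i
  exact SemidirectProduct.ext (funext fun i => hs i) hr

lemma Lam_single (m : Mon) (p : JN) :
    Lam m (Pi.single p 1) = eps (m.left (m.right p)) • (Pi.single (m.right p) 1 : WN) := by
  funext i
  rw [Lam_apply, lmap_apply]
  by_cases hi : i = m.right p
  · subst hi
    rw [Equiv.Perm.inv_def, Equiv.symm_apply_apply]
    simp
  · have hne : m.right⁻¹ i ≠ p := by
      intro hcon
      exact hi (by rw [← hcon, Equiv.Perm.inv_def, Equiv.apply_symm_apply])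
    rw [Pi.single_apply, if_neg hne, mul_zero, Pi.smul_apply, Pi.single_apply, if_neg hi,
      smul_zero]

/-! #### The concrete signed permutations -/

def inv1 : Fin 12 → Fin 12 := ![2, 6, 3, 0, 5, 7, 8, 4, 1, 9, 10, 11]
def inv2 : Fin 12 → Fin 12 := ![7, 2, 4, 5, 1, 6, 3, 8, 0, 9, 10, 11]
def invB : Fin 12 → Fin 12 := ![2, 8, 1, 4, 6, 5, 7, 3, 0, 9, 10, 11]

def sigma1 : Equiv.Perm JN :=
  ⟨fun p => (idx1 p.1, p.2), fun p => (inv1 p.1, p.2),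
    fun p => by revert p; decide, fun p => by revert p; decide⟩

def sigma2 : Equiv.Perm JN :=
  ⟨fun p => (idx2 p.1, p.2), fun p => (inv2 p.1, p.2),
    fun p => by revert p; decide, fun p => by revert p; decide⟩

def sigmaB : Equiv.Perm JN :=
  ⟨fun p => (idxB p.1, swB p.1 p.2), fun p => (invB p.1, swB (invB p.1) p.2),
    fun p => by revert p; decide, fun p => by revert p; decide⟩

def s1t : Fin 12 → ZMod 2 := ![0, 1, 1, 1, 1, 1, 1, 0, 0, 0, 0, 0]
def sBt : Fin 12 → ZMod 2 := ![0, 0, 1, 0, 1, 0, 1, 0, 1, 0, 0, 0]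

def mA1 : Mon := ⟨fun p => Multiplicative.ofAdd (s1t (inv1 p.1)), sigma1⟩
def mA2 : Mon := ⟨1, sigma2⟩
def mBt : Mon := ⟨fun p => Multiplicative.ofAdd (sBt (invB p.1)), sigmaB⟩

lemma sA1val : ∀ (j : Fin 12) (k : Fin 2), eps (mA1.left (idx1 j, k)) = sgn1 j := by decide
lemma sA2val : ∀ (j : Fin 12) (k : Fin 2), eps (mA2.left (idx2 j, k)) = 1 := by decide
lemma sBtval : ∀ (j : Fin 12) (k : Fin 2), eps (mBt.left (idxB j, swB j k)) = sgnB j := by decide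

lemma hA1 : ∀ (j : Fin 12) (k : Fin 2), Lam mA1 (Et j k) = sgn1 j • Et (idx1 j) k := by
  intro j k
  have h := Lam_single mA1 ((j, k) : JN)
  rw [show Et j k = Pi.single ((j, k) : JN) 1 from rfl, h]
  show eps (mA1.left (idx1 j, k)) • (Pi.single ((idx1 j, k) : JN) 1 : WN) = _
  rw [sA1val j k]
  rfl

lemma hA2 : ∀ (j : Fin 12) (k : Fin 2), Lam mA2 (Et j k) = Et (idx2 j) k := by
  intro j k
  have h := Lam_single mA2 ((j, k) : JN)
  rw [show Et j k = Pi.single ((j, k) : JN) 1 from rfl, h]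
  show eps (mA2.left (idx2 j, k)) • (Pi.single ((idx2 j, k) : JN) 1 : WN) = _
  rw [sA2val j k, one_smul]
  rfl

lemma hBt : ∀ (j : Fin 12) (k : Fin 2),
    Lam mBt (Et j k) = sgnB j • Et (idxB j) (swB j k) := by
  intro j k
  have h := Lam_single mBt ((j, k) : JN)
  rw [show Et j k = Pi.single ((j, k) : JN) 1 from rfl, h]
  show eps (mBt.left (idxB j, swB j k)) • (Pi.single ((idxB j, swB j k) : JN) 1 : WN) = _
  rw [sBtval j k]
  rfl

/-! #### The bilinear form -/

/-- Integer version of the Gram matrix. -/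
def GZ : JN → JN → ℤ := fun i j =>
  if i.1 = j.1 then (if i.2 = j.2 then 2 else -1) else 0

lemma GN_cast (i j : JN) : GN i j = ((GZ i j : ℤ) : ℚ) := by
  unfold GN GZ; split_ifs <;> norm_num

lemma HBtZ : ∀ p q : JN, epsZ (mBt.left (mBt.right p)) * epsZ (mBt.left (mBt.right q)) *
    GZ (mBt.right p) (mBt.right q) = GZ p q := by decide

lemma HBt : ∀ p q : JN, eps (mBt.left (mBt.right p)) * eps (mBt.left (mBt.right q)) *
    GN (mBt.right p) (mBt.right q) = GN p q := by
  intro p q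
  rw [eps_cast, eps_cast, GN_cast, GN_cast, ← Int.cast_mul, ← Int.cast_mul, HBtZ p q]

lemma BW_Lam (m : Mon)
    (H : ∀ p q : JN, eps (m.left (m.right p)) * eps (m.left (m.right q)) *
        GN (m.right p) (m.right q) = GN p q)
    (x y : WN) : BW (Lam m x) (Lam m y) = BW x y := by
  have h1 : ∀ f : JN → ℚ, ∑ i : JN, f (m.right i) = ∑ i : JN, f i :=
    fun f => Equiv.sum_comp m.right f
  unfold BW
  rw [← h1 (fun i => ∑ j : JN, Lam m x i * GN i j * Lam m y j)]
  refine Finset.sum_congr rfl fun p _ => ?_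
  rw [← h1 (fun j => Lam m x (m.right p) * GN (m.right p) j * Lam m y j)]
  refine Finset.sum_congr rfl fun q _ => ?_
  rw [Lam_apply, Lam_apply, lmap_apply, lmap_apply, Equiv.Perm.inv_def, Equiv.symm_apply_apply,
    Equiv.symm_apply_apply]
  linear_combination (x p * y q) * H p q

/-! #### The lattice -/

def cT : Fin 6 → Fin 6 → ℤ :=
  ![![0, 2, 0, 0, 0, 0],
    ![2, 1, 1, 0, 0, 0],
    ![0, 2, 1, 0, 0, 0],
    ![0, 0, 1, 1, 0, 0],
    ![0, 2, 1, 0, 1, 0],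
    ![0, 1, 1, 0, 0, 2]]

def rT : Fin 6 → Fin 12 → Fin 2 → ℤ :=
  ![![![0,1], ![0,0], ![0,-1], ![0,1], ![0,1], ![0,-1], ![0,0], ![0,-1], ![0,0], ![0,0], ![0,0], ![0,0]],
    ![![0,1], ![-1,-2], ![-1,-2], ![0,-1], ![0,0], ![0,-1], ![0,-1], ![-1,-1], ![-1,-1], ![0,0], ![0,0], ![0,0]],
    ![![1,2], ![-1,-1], ![0,-1], ![1,1], ![1,2], ![-1,-1], ![0,0], ![0,-1], ![-1,-1], ![0,0], ![0,0], ![0,0]],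
    ![![0,1], ![0,0], ![-1,-1], ![-1,-1], ![0,0], ![0,1], ![0,0], ![0,0], ![-1,-1], ![0,0], ![0,0], ![0,0]],
    ![![2,3], ![0,0], ![-1,-1], ![0,0], ![1,2], ![0,-1], ![0,0], ![0,-1], ![-1,-1], ![0,0], ![0,0], ![0,0]],
    ![![2,3], ![-1,-2], ![1,1], ![0,1], ![0,0], ![0,0], ![0,0], ![-1,-1], ![-1,-1], ![0,0], ![0,0], ![0,-1]]]

/-- Integer version of the glue matrix. -/
def glZ : Fin 6 → Fin 12 → ℤ :=
  ![![0, 1, 1, 1, 1, 1, 1, 0, 0, 0, 0, 0],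
    ![-1, 0, 1, -1, -1, 1, 0, 1, 0, 0, 0, 0],
    ![-1, 1, 0, 1, -1, -1, 0, 0, 1, 0, 0, 0],
    ![-1, -1, 1, 0, 1, -1, 0, 0, 0, 1, 0, 0],
    ![-1, -1, -1, 1, 0, 1, 0, 0, 0, 0, 1, 0],
    ![-1, 1, -1, -1, 1, 0, 0, 0, 0, 0, 0, 1]]

def vv : Fin 2 → ℤ := ![1, 2]

lemma glueMat_cast : ∀ (i : Fin 6) (j : Fin 12), glueMat i j = ((glZ i j : ℤ) : ℚ) := by decide

lemma EtV_apply (j' : Fin 12) (p : JN) :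
    EtV j' p = if p.1 = j' then ((vv p.2 : ℤ) : ℚ) else 0 := by
  rcases p with ⟨j, k⟩
  fin_cases k <;> by_cases hj : j = j' <;>
    simp [EtV, Et, Pi.single_apply, Prod.ext_iff, hj, vv] <;> norm_num

lemma wvec_apply (i : Fin 6) (p : JN) :
    wvec i p = ((glZ i p.1 : ℤ) : ℚ) * ((vv p.2 : ℤ) : ℚ) / 3 := by
  unfold wvec
  rw [Pi.smul_apply, Finset.sum_apply]
  rw [Finset.sum_eq_single p.1]
  · rw [Pi.smul_apply, EtV_apply, if_pos rfl, smul_eq_mul, smul_eq_mul, glueMat_cast]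
    ring
  · intro b _ hb
    rw [Pi.smul_apply, EtV_apply, if_neg (fun h => hb h.symm), smul_eq_mul, mul_zero]
  · intro h; exact absurd (Finset.mem_univ _) h

set_option maxHeartbeats 40000000 in
lemma keyZ : ∀ (i : Fin 6) (p : JN),
    epsZ (mBt.left p) * (glZ i (invB p.1) * vv (swB (invB p.1) p.2)) =
      (cT i 0 * (glZ 0 p.1 * vv p.2) + cT i 1 * (glZ 1 p.1 * vv p.2) +
       cT i 2 * (glZ 2 p.1 * vv p.2) + cT i 3 * (glZ 3 p.1 * vv p.2) +
       cT i 4 * (glZ 4 p.1 * vv p.2) + cT i 5 * (glZ 5 p.1 * vv p.2)) +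
      3 * rT i p.1 p.2 := by decide

lemma hkey (i : Fin 6) :
    Lam mBt (wvec i) =
      (∑ t : Fin 6, ((cT i t : ℚ)) • wvec t) + (fun p : JN => ((rT i p.1 p.2 : ℤ) : ℚ)) := by
  funext p
  rw [Lam_apply, lmap_apply, Pi.add_apply, Finset.sum_apply]
  simp only [Pi.smul_apply, smul_eq_mul, wvec_apply]
  rw [show mBt.right⁻¹ p = ((invB p.1, swB (invB p.1) p.2) : JN) from rfl]
  rw [Fin.sum_univ_six, eps_cast]
  have h2 : ((epsZ (mBt.left p) * (glZ i (invB p.1) * vv (swB (invB p.1) p.2)) : ℤ) : ℚ) =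
      (((cT i 0 * (glZ 0 p.1 * vv p.2) + cT i 1 * (glZ 1 p.1 * vv p.2) +
       cT i 2 * (glZ 2 p.1 * vv p.2) + cT i 3 * (glZ 3 p.1 * vv p.2) +
       cT i 4 * (glZ 4 p.1 * vv p.2) + cT i 5 * (glZ 5 p.1 * vv p.2)) +
      3 * rT i p.1 p.2 : ℤ) : ℚ) := by exact_mod_cast keyZ i p
  push_cast at h2
  linear_combination h2 / 3

lemma Et_mem (p : JN) : Pi.single p (1 : ℚ) ∈ NL :=
  Submodule.subset_span (Or.inl ⟨p.1, p.2, rfl⟩)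

lemma wvec_mem (t : Fin 6) : wvec t ∈ NL :=
  Submodule.subset_span (Or.inr ⟨t, rfl⟩)

lemma intVec_mem (f : JN → ℤ) : (fun p => ((f p : ℤ) : ℚ)) ∈ NL := by
  have h : (fun p => ((f p : ℤ) : ℚ)) = ∑ p : JN, ((f p : ℚ)) • (Pi.single p 1 : WN) := by
    funext q
    rw [Finset.sum_apply]
    simp [Pi.single_apply]
  rw [h]
  refine Submodule.sum_mem _ fun p _ => ?_
  rw [Int.cast_smul_eq_zsmul]
  exact zsmul_mem (Et_mem p) _

lemma Bt_step : ∀ z ∈ NL, Lam mBt z ∈ NL := by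
  intro z hz
  refine Submodule.span_induction ?_ ?_ ?_ ?_ hz
  · rintro g (⟨j, k, rfl⟩ | ⟨t, rfl⟩)
    · rw [hBt j k]
      have hsb : sgnB j = 1 ∨ sgnB j = -1 := by revert j; decide
      have hme : Et (idxB j) (swB j k) ∈ NL := Et_mem ((idxB j, swB j k) : JN)
      rcases hsb with h | h <;> rw [h]
      · rw [one_smul]; exact hme
      · rw [neg_one_smul]; exact Submodule.neg_mem _ hme
    · rw [hkey t]
      refine Submodule.add_mem _ (Submodule.sum_mem _ fun u _ => ?_) (intVec_mem _)
      rw [Int.cast_smul_eq_zsmul]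
      exact zsmul_mem (wvec_mem u) _
  · rw [map_zero]; exact Submodule.zero_mem _
  · intro a b _ _ ha hb
    rw [map_add]; exact Submodule.add_mem _ ha hb
  · intro n a _ ha
    rw [map_zsmul]; exact zsmul_mem ha _

lemma mBt_pow4 : mBt ^ 4 = 1 := by decide

lemma Bt_pow4 : ∀ x : WN, Lam mBt (Lam mBt (Lam mBt (Lam mBt x))) = x := by
  intro x
  have h : (Lam mBt) ^ 4 = 1 := by rw [← map_pow, mBt_pow4, map_one]
  have h2 := congrArg (fun (e : WN ≃ₗ[ℚ] WN) => e x) h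
  simpa [pow_succ] using h2

/-! #### The abstract semidirect product -/

abbrev K3 : Type := Multiplicative (ZMod 3 × ZMod 3)
abbrev K4 : Type := Multiplicative (ZMod 4)

instance : DecidableEq (MulAut K3) := fun e f =>
  decidable_of_iff (∀ x, e x = f x) ⟨fun h => MulEquiv.ext h, fun h x => by rw [h]⟩

def Jm : MulAut K3 :=
  AddEquiv.toMultiplicative
    ⟨⟨fun p => (-p.2, p.1), fun p => (p.2, -p.1),
      fun p => by simp, fun p => by simp⟩, by decide⟩

def phi : K4 →* MulAut K3 where
  toFun c := Jm ^ (Multiplicative.toAdd c).val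
  map_one' := by decide
  map_mul' := by decide

abbrev G0 : Type := K3 ⋊[phi] K4

instance : Fintype G0 :=
  Fintype.ofEquiv (K3 × K4)
    ⟨fun p => ⟨p.1, p.2⟩, fun x => (x.left, x.right), fun p => rfl, fun x => rfl⟩

lemma card_G0 : Nat.card G0 = 36 := by
  have e : G0 ≃ K3 × K4 :=
    ⟨fun x => (x.left, x.right), fun p => ⟨p.1, p.2⟩, fun x => rfl, fun p => rfl⟩
  rw [Nat.card_congr e, Nat.card_prod]
  rw [Nat.card_congr (Multiplicative.toAdd (α := ZMod 3 × ZMod 3)),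
    Nat.card_congr (Multiplicative.toAdd (α := ZMod 4)), Nat.card_prod,
    Nat.card_zmod, Nat.card_zmod]

def fN : K3 →* Mon where
  toFun a := mA1 ^ (Multiplicative.toAdd a).1.val * mA2 ^ (Multiplicative.toAdd a).2.val
  map_one' := by decide
  map_mul' := by decide

def fG : K4 →* Mon where
  toFun c := mBt ^ (Multiplicative.toAdd c).val
  map_one' := by decide
  map_mul' := by decide

lemma hcompat : ∀ g : K4,
    fN.comp (phi g).toMonoidHom = (MulAut.conj (fG g)).toMonoidHom.comp fN := by
  have key : ∀ (g : K4) (n : K3), fN (phi g n) = fG g * fN n * (fG g)⁻¹ := by decide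
  intro g
  refine MonoidHom.ext fun n => ?_
  simpa [MulAut.conj_apply] using key g n

def Phi : G0 →* Mon := SemidirectProduct.lift fN fG hcompat

lemma Phi_inj : Function.Injective Phi :=
  (injective_iff_map_eq_one Phi).2 (by decide)

def fN' : K3 →* Equiv.Perm F3 where
  toFun a := T1 ^ (Multiplicative.toAdd a).1.val * T2 ^ (Multiplicative.toAdd a).2.val
  map_one' := by decide
  map_mul' := by decide

def fG' : K4 →* Equiv.Perm F3 where
  toFun c := JPerm ^ (Multiplicative.toAdd c).val
  map_one' := by decide
  map_mul' := by decide

lemma hcompat' : ∀ g : K4,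
    fN'.comp (phi g).toMonoidHom = (MulAut.conj (fG' g)).toMonoidHom.comp fN' := by
  have key : ∀ (g : K4) (n : K3), fN' (phi g n) = fG' g * fN' n * (fG' g)⁻¹ := by decide
  intro g
  refine MonoidHom.ext fun n => ?_
  simpa [MulAut.conj_apply] using key g n

def Phi' : G0 →* Equiv.Perm F3 := SemidirectProduct.lift fN' fG' hcompat'

lemma Phi'_inj : Function.Injective Phi' :=
  (injective_iff_map_eq_one Phi').2 (by decide)

lemma htop : (⊤ : Subgroup G0) = Subgroup.closure
    {SemidirectProduct.inl (Multiplicative.ofAdd (((1 : ZMod 3), (0 : ZMod 3)))),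
     SemidirectProduct.inl (Multiplicative.ofAdd (((0 : ZMod 3), (1 : ZMod 3)))),
     SemidirectProduct.inr (Multiplicative.ofAdd ((1 : ZMod 4)))} := by
  apply le_antisymm ?_ le_top
  intro x _
  rw [← SemidirectProduct.inl_left_mul_inr_right x]
  have hdec3 : ∀ n : K3, n = (Multiplicative.ofAdd (((1 : ZMod 3), (0 : ZMod 3)))) ^
      (Multiplicative.toAdd n).1.val *
      (Multiplicative.ofAdd (((0 : ZMod 3), (1 : ZMod 3)))) ^ (Multiplicative.toAdd n).2.val := by
    decide
  have hdec4 : ∀ g : K4, g = (Multiplicative.ofAdd ((1 : ZMod 4))) ^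
      (Multiplicative.toAdd g).val := by decide
  refine mul_mem ?_ ?_
  · rw [hdec3 x.left, map_mul, map_pow, map_pow]
    refine mul_mem (pow_mem (Subgroup.subset_closure ?_) _) (pow_mem (Subgroup.subset_closure ?_) _)
    · exact Set.mem_insert _ _
    · exact Set.mem_insert_of_mem _ (Set.mem_insert _ _)
  · rw [hdec4 x.right, map_pow]
    refine pow_mem (Subgroup.subset_closure ?_) _
    exact Set.mem_insert_of_mem _ (Set.mem_insert_of_mem _ rfl)

lemma Phi_range : Phi.range = Subgroup.closure {mA1, mA2, mBt} := by
  rw [MonoidHom.range_eq_map, htop, MonoidHom.map_closure]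
  congr 1
  rw [Set.image_insert_eq, Set.image_insert_eq, Set.image_singleton]
  rw [show Phi (SemidirectProduct.inl (Multiplicative.ofAdd (((1 : ZMod 3), (0 : ZMod 3)))))
      = mA1 by decide,
    show Phi (SemidirectProduct.inl (Multiplicative.ofAdd (((0 : ZMod 3), (1 : ZMod 3)))))
      = mA2 by decide,
    show Phi (SemidirectProduct.inr (Multiplicative.ofAdd ((1 : ZMod 4)))) = mBt by decide]

lemma Phi'_range : Phi'.range = ModelGroup := by
  rw [MonoidHom.range_eq_map, htop, MonoidHom.map_closure, ModelGroup]
  congr 1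
  rw [Set.image_insert_eq, Set.image_insert_eq, Set.image_singleton]
  rw [show Phi' (SemidirectProduct.inl (Multiplicative.ofAdd (((1 : ZMod 3), (0 : ZMod 3)))))
      = T1 by decide,
    show Phi' (SemidirectProduct.inl (Multiplicative.ofAdd (((0 : ZMod 3), (1 : ZMod 3)))))
      = T2 by decide,
    show Phi' (SemidirectProduct.inr (Multiplicative.ofAdd ((1 : ZMod 4)))) = JPerm by decide]

lemma map_Lam_closure :
    Subgroup.map Lam (Subgroup.closure {mA1, mA2, mBt}) =
      Subgroup.closure {Lam mA1, Lam mA2, Lam mBt} := by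
  rw [MonoidHom.map_closure]
  congr 1
  rw [Set.image_insert_eq, Set.image_insert_eq, Set.image_singleton]

/-- The composite isomorphism. -/
noncomputable def finalIso : (Subgroup.closure {Lam mA1, Lam mA2, Lam mBt} :
    Subgroup (WN ≃ₗ[ℚ] WN)) ≃* ModelGroup :=
  ((MulEquiv.subgroupCongr map_Lam_closure.symm).trans
    ((Subgroup.equivMapOfInjective _ Lam Lam_inj).symm.trans
      ((MulEquiv.subgroupCongr Phi_range.symm).trans
        ((MonoidHom.ofInjective Phi_inj).symm.trans
          ((MonoidHom.ofInjective Phi'_inj).trans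
            (MulEquiv.subgroupCongr Phi'_range))))))

noncomputable def G0_iso : (Subgroup.closure {Lam mA1, Lam mA2, Lam mBt} :
    Subgroup (WN ≃ₗ[ℚ] WN)) ≃* G0 :=
  (MulEquiv.subgroupCongr map_Lam_closure.symm).trans
    ((Subgroup.equivMapOfInjective _ Lam Lam_inj).symm.trans
      ((MulEquiv.subgroupCongr Phi_range.symm).trans
        (MonoidHom.ofInjective Phi_inj).symm))

end St14

theorem statement14 :
    ∃ A1 A2 Bt : WN ≃ₗ[ℚ] WN,
      -- defining values of α̃¹, α̃² and β̃ on the basis vectors Ẽ_j^(ℓ)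
      (∀ (j : Fin 12) (k : Fin 2), A1 (Et j k) = sgn1 j • Et (idx1 j) k) ∧
      (∀ (j : Fin 12) (k : Fin 2), A2 (Et j k) = Et (idx2 j) k) ∧
      (∀ (j : Fin 12) (k : Fin 2), Bt (Et j k) = sgnB j • Et (idxB j) (swB j k)) ∧
      -- β̃ preserves the bilinear form and maps N onto itself, and has order 4
      (∀ x y : WN, BW (Bt x) (Bt y) = BW x y) ∧
      ((fun v => Bt v) '' NL = NL) ∧
      orderOf Bt = 4 ∧
      -- the subgroup of Aut(N) generated by β̃, α̃¹, α̃² has order 36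
      Nat.card (Subgroup.closure {A1, A2, Bt} : Subgroup (WN ≃ₗ[ℚ] WN)) = 36 ∧
      -- and is isomorphic to (ℤ/3 × ℤ/3) ⋊ ℤ/4 with the generator of ℤ/4
      -- acting by (a,b) ↦ (−b,a)
      Nonempty ((Subgroup.closure {A1, A2, Bt} : Subgroup (WN ≃ₗ[ℚ] WN)) ≃* ModelGroup) := by
  refine ⟨St14.Lam St14.mA1, St14.Lam St14.mA2, St14.Lam St14.mBt,
    St14.hA1, St14.hA2, St14.hBt, ?_, ?_, ?_, ?_, ?_⟩
  · exact St14.BW_Lam St14.mBt St14.HBt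
  · apply Set.eq_of_subset_of_subset
    · rintro _ ⟨z, hz, rfl⟩
      exact St14.Bt_step z hz
    · intro x hx
      exact ⟨St14.Lam St14.mBt (St14.Lam St14.mBt (St14.Lam St14.mBt x)),
        St14.Bt_step _ (St14.Bt_step _ (St14.Bt_step _ hx)), St14.Bt_pow4 x⟩
  · rw [orderOf_injective St14.Lam St14.Lam_inj St14.mBt]
    rw [orderOf_eq_iff (by norm_num)]
    refine ⟨St14.mBt_pow4, ?_⟩
    intro m hm hm'
    interval_cases m <;> decide
  · rw [Nat.card_congr St14.G0_iso.toEquiv]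
    exact St14.card_G0
  · exact ⟨St14.finalIso⟩
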